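/- For every integer h ≥ 1 and variable x with xD denoting the operator x·d/dx, the identity binom(xD - 1, h-1) applied to x^{h-1} e^{-t d / x} equals (t d)^{h-1}/(h-1)! · e^{-t d / x}, where binom(xD-1, h-1) f = (1/(h-1)!)(xD - 1)(xD - 2)···(xD - (h-1)) f. -/

import Mathlib

/-- The operator `f ↦ (x d/dx - i) f` on functions of a real variable. -/
noncomputable def xDsub (i : ℕ) (f : ℝ → ℝ) : ℝ → ℝ :=
  fun x => x * deriv f x - (i : ℝ) * f x

/-- `opChain m f = (xD - m)(xD - (m-1)) ⋯ (xD - 1) f`. -/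
noncomputable def opChain : ℕ → (ℝ → ℝ) → (ℝ → ℝ)
  | 0, f => f
  | m + 1, f => xDsub (m + 1) (opChain m f)

noncomputable def FF (c : ℝ) (k : ℕ) : ℝ → ℝ := fun y => y ^ k * Real.exp (-c / y)

noncomputable def DD (c : ℝ) (k : ℕ) (x : ℝ) : ℝ :=
  (k : ℝ) * x ^ (k - 1) * Real.exp (-c / x) + x ^ k * (Real.exp (-c / x) * (c / x ^ 2))

lemma hasDerivAt_FF (c : ℝ) (k : ℕ) {x : ℝ} (hx : x ≠ 0) :
    HasDerivAt (FF c k) (DD c k x) x := by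
  have h2 : HasDerivAt (fun y : ℝ => -c / y) (c / x ^ 2) x := by
    have := (hasDerivAt_inv hx).const_mul (-c)
    have hval : -c * -(x ^ 2)⁻¹ = c / x ^ 2 := by ring
    simpa [div_eq_mul_inv, hval] using this
  exact (hasDerivAt_pow k x).mul h2.exp

lemma xmul_DD (c : ℝ) (k : ℕ) (hk : 1 ≤ k) {x : ℝ} (hx : x ≠ 0) :
    x * DD c k x = (k : ℝ) * FF c k x + c * FF c (k - 1) x := by
  obtain ⟨k', rfl⟩ : ∃ k', k = k' + 1 := ⟨k - 1, (Nat.succ_pred_eq_of_pos hk).symm⟩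
  simp only [DD, FF, Nat.add_sub_cancel, pow_succ]
  field_simp

noncomputable def coef (m j i : ℕ) : ℝ :=
  (j.choose i : ℝ) * ∏ l ∈ Finset.Icc (i + 1) j, ((m : ℝ) - l)

lemma coef_self (m j : ℕ) : coef m j j = 1 := by simp [coef]

lemma coef_gt (m j i : ℕ) (h : j < i) : coef m j i = 0 := by
  simp [coef, Nat.choose_eq_zero_of_lt h]

lemma coef_rec_zero (m j : ℕ) : coef m (j + 1) 0 = ((m : ℝ) - (j + 1)) * coef m j 0 := by
  simp only [coef, Nat.choose_zero_right, Nat.cast_one, one_mul]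
  rw [Finset.prod_Icc_succ_top (by omega)]
  push_cast
  ring

lemma coef_rec (m j i : ℕ) (hij : i ≤ j) :
    coef m (j + 1) (i + 1)
      = ((m : ℝ) - (i + 1) - (j + 1)) * coef m j (i + 1) + coef m j i := by
  rcases eq_or_lt_of_le hij with rfl | hlt
  · simp [coef_self, coef_gt m i (i + 1) (by omega)]
  · have h1 : i + 1 ≤ j := hlt
    have hsplit1 : ∏ l ∈ Finset.Icc (i + 2) (j + 1), ((m : ℝ) - l)
        = (∏ l ∈ Finset.Icc (i + 2) j, ((m : ℝ) - l)) * ((m : ℝ) - (j + 1)) := by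
      rw [Finset.prod_Icc_succ_top (by omega)]
      push_cast; ring_nf
    have hsplit2 : ∏ l ∈ Finset.Icc (i + 1) j, ((m : ℝ) - l)
        = ((m : ℝ) - (i + 1)) * ∏ l ∈ Finset.Icc (i + 2) j, ((m : ℝ) - l) := by
      rw [Finset.Icc_eq_cons_Ioc h1, Finset.prod_cons, show i + 2 = i + 1 + 1 from rfl, Finset.Icc_add_one_left_eq_Ioc]
      push_cast; ring_nf
    have hchoose : (j.choose (i + 1) : ℝ) * (i + 1) = (j.choose i : ℝ) * ((j : ℝ) - i) := by
      have := Nat.choose_succ_right_eq j i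
      have hcast : ((j.choose i * (j - i) : ℕ) : ℝ) = (j.choose i : ℝ) * ((j : ℝ) - i) := by
        push_cast [hij]; ring
      calc (j.choose (i + 1) : ℝ) * (i + 1) = ((j.choose (i + 1) * (i + 1) : ℕ) : ℝ) := by
            push_cast; ring
        _ = _ := by rw [this, hcast]
    simp only [coef, Nat.choose_succ_succ j i, hsplit1, hsplit2, Nat.succ_eq_add_one]
    push_cast
    linear_combination (∏ l ∈ Finset.Icc (i + 2) j, ((m : ℝ) - l)) * hchoose

lemma coef_top (m i : ℕ) (h : i < m) : coef m m i = 0 := by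
  have h0 : ((m : ℝ) - (m : ℕ)) = 0 := by simp
  refine mul_eq_zero_of_right _ (Finset.prod_eq_zero (i := m) ?_ h0)
  simp [Finset.mem_Icc]; omega

lemma opChain_eq (c : ℝ) (m : ℕ) :
    ∀ j, j ≤ m → ∀ x : ℝ, 0 < x →
      opChain j (FF c m) x
        = ∑ i ∈ Finset.range (j + 1), coef m j i * c ^ i * FF c (m - i) x := by
  intro j
  induction j with
  | zero => intro _ x hx; simp [opChain, coef_self]
  | succ j ih =>
    intro hjm x hx
    have hjm' : j ≤ m := by omega
    -- the sum function
    set S : ℝ → ℝ := fun y => ∑ i ∈ Finset.range (j + 1), coef m j i * c ^ i * FF c (m - i) y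
      with hS
    have hSderiv : HasDerivAt S
        (∑ i ∈ Finset.range (j + 1), coef m j i * c ^ i * DD c (m - i) x) x := by
      apply HasDerivAt.fun_sum
      intro i _
      exact ((hasDerivAt_FF c (m - i) hx.ne').const_mul _)
    have hev : opChain j (FF c m) =ᶠ[nhds x] S := by
      filter_upwards [isOpen_Ioi.mem_nhds hx] with y hy
      exact ih hjm' y hy
    have hderiv : deriv (opChain j (FF c m)) x
        = ∑ i ∈ Finset.range (j + 1), coef m j i * c ^ i * DD c (m - i) x := by
      rw [hev.deriv_eq, hSderiv.deriv]
    simp only [opChain, xDsub, Nat.cast_add, Nat.cast_one]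
    rw [hderiv, ih hjm' x hx, Finset.mul_sum, Finset.mul_sum, ← Finset.sum_sub_distrib]
    have hterm : ∀ i ∈ Finset.range (j + 1),
        x * (coef m j i * c ^ i * DD c (m - i) x)
          - ((j : ℝ) + 1) * (coef m j i * c ^ i * FF c (m - i) x)
        = (coef m j i * (((m : ℝ) - i) - (j + 1)) * c ^ i) * FF c (m - i) x
          + (coef m j i * c ^ (i + 1)) * FF c (m - i - 1) x := by
      intro i hi
      have hi' : i < j + 1 := Finset.mem_range.mp hi
      have hk : 1 ≤ m - i := by omega
      have hx' : x * DD c (m - i) x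
          = ((m - i : ℕ) : ℝ) * FF c (m - i) x + c * FF c (m - i - 1) x :=
        xmul_DD c (m - i) hk hx.ne'
      have hcast : ((m - i : ℕ) : ℝ) = (m : ℝ) - i := by
        have : i ≤ m := by omega
        push_cast [this]; ring
      calc x * (coef m j i * c ^ i * DD c (m - i) x)
            - ((j : ℝ) + 1) * (coef m j i * c ^ i * FF c (m - i) x)
          = coef m j i * c ^ i * (x * DD c (m - i) x)
            - ((j : ℝ) + 1) * (coef m j i * c ^ i * FF c (m - i) x) := by ring
        _ = _ := by rw [hx', hcast]; ring
    rw [Finset.sum_congr rfl hterm, Finset.sum_add_distrib]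
    rw [Finset.sum_range_succ' (fun i => coef m (j + 1) i * c ^ i * FF c (m - i) x) (j + 1)]
    simp only [Nat.sub_sub]
    have hT : ∀ k ∈ Finset.range (j + 1),
        coef m (j + 1) (k + 1) * c ^ (k + 1) * FF c (m - (k + 1)) x
          = coef m j (k + 1) * (((m : ℝ) - (k + 1)) - ((j : ℝ) + 1)) * c ^ (k + 1)
              * FF c (m - (k + 1)) x
            + coef m j k * c ^ (k + 1) * FF c (m - (k + 1)) x := by
      intro k hk
      have hk' : k ≤ j := by have := Finset.mem_range.mp hk; omega
      rw [coef_rec m j k hk']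
      push_cast
      ring
    rw [Finset.sum_congr rfl hT, Finset.sum_add_distrib]
    have key : (∑ i ∈ Finset.range (j + 1),
          coef m j i * ((m : ℝ) - (i : ℝ) - ((j : ℝ) + 1)) * c ^ i * FF c (m - i) x)
        = (∑ i ∈ Finset.range (j + 1),
            coef m j (i + 1) * ((m : ℝ) - ((i : ℝ) + 1) - ((j : ℝ) + 1)) * c ^ (i + 1)
              * FF c (m - (i + 1)) x)
          + coef m (j + 1) 0 * c ^ 0 * FF c (m - 0) x := by
      rw [Finset.sum_range_succ' (fun i =>
        coef m j i * ((m : ℝ) - (i : ℝ) - ((j : ℝ) + 1)) * c ^ i * FF c (m - i) x) j]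
      rw [Finset.sum_range_succ (fun i =>
        coef m j (i + 1) * ((m : ℝ) - ((i : ℝ) + 1) - ((j : ℝ) + 1)) * c ^ (i + 1)
          * FF c (m - (i + 1)) x) j]
      rw [coef_gt m j (j + 1) (by omega), coef_rec_zero]
      push_cast
      ring
    rw [key]
    ring

lemma opChain_top (c : ℝ) (m : ℕ) (x : ℝ) (hx : 0 < x) :
    opChain m (FF c m) x = c ^ m * Real.exp (-c / x) := by
  rw [opChain_eq c m m le_rfl x hx, Finset.sum_eq_single m]
  · simp [coef_self, FF]
  · intro i hi hne
    have hlt : i < m := by have := Finset.mem_range.mp hi; omega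
    simp [coef_top m i hlt]
  · intro hmem; exact absurd (Finset.self_mem_range_succ m) hmem

/-- For `h ≥ 1` and positive parameters `t`, `d`, and `x > 0`:
`binom(xD-1, h-1) (x^{h-1} e^{-td/x}) = ((td)^{h-1}/(h-1)!) e^{-td/x}`, where
`binom(xD-1,h-1) = (1/(h-1)!)(xD-1)(xD-2)⋯(xD-(h-1))`. -/
theorem xD_binom_identity (h : ℕ) (hh : 1 ≤ h) (t d x : ℝ) (ht : 0 < t) (hd : 0 < d)
    (hx : 0 < x) :
    (1 / (Nat.factorial (h - 1) : ℝ)) *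
        opChain (h - 1) (fun y => y ^ (h - 1) * Real.exp (-(t * d) / y)) x
      = (t * d) ^ (h - 1) / (Nat.factorial (h - 1) : ℝ) * Real.exp (-(t * d) / x) := by
  have hfun : (fun y : ℝ => y ^ (h - 1) * Real.exp (-(t * d) / y)) = FF (t * d) (h - 1) := rfl
  rw [hfun, opChain_top (t * d) (h - 1) x hx]
  ring
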